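/- (Keisler) If U is a (μ,κ)-regular ultrafilter on a set X, then the cardinality of the ultrapower (2^{<μ})^X / U is at least 2^κ. -/

import Mathlib

open Cardinal

/-- Keisler's theorem: if `U` is a `(μ,κ)`-regular ultrafilter on a set `X`
(there is a κ-indexed family of members of `U` such that every subfamily indexed by a set
of order type `μ` has empty intersection), then the ultrapower `(2^{<μ})^X / U` has
cardinality at least `2^κ`. -/
theorem stmt13 (μ κ : Cardinal.{0}) (X : Type) (U : Ultrafilter X)
    (hreg : ∃ A : Ordinal → Set X,
      (∀ i < κ.ord, A i ∈ U) ∧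
      ∀ g : Ordinal → Ordinal, StrictMonoOn g (Set.Iio μ.ord) →
        (∀ i < μ.ord, g i < κ.ord) →
        (⋂ i ∈ Set.Iio μ.ord, A (g i)) = ∅) :
    ∀ β : Type, #β = 2 ^< μ →
      (2 : Cardinal) ^ κ ≤ #(Filter.Germ (U : Filter X) β) := by
  intro β hβ
  obtain ⟨A, hAU, hAreg⟩ := hreg
  set T := κ.ord.ToType with hT
  -- the ordinal below κ.ord corresponding to an element of T
  set ordOf : T → Ordinal := fun t => ((Ordinal.ToType.mk (o := κ.ord)).symm t : Ordinal)
    with hordOf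
  have hordlt : ∀ t, ordOf t < κ.ord := fun t => ((Ordinal.ToType.mk (o := κ.ord)).symm t).2
  have hordmono : StrictMono ordOf := fun t t' h => by
    exact_mod_cast (Ordinal.ToType.mk (o := κ.ord)).symm.strictMono h
  set S : X → Set T := fun x => {t | x ∈ A (ordOf t)} with hSdef
  -- each S x has cardinality < μ
  have hS : ∀ x : X, #(S x) < μ := by
    intro x
    by_contra hc
    push_neg at hc
    set o := Ordinal.type ((· < ·) : S x → S x → Prop) with ho
    have hoμ : μ.ord ≤ o := Cardinal.ord_le.mpr (by rw [ho, Ordinal.card_type]; exact hc)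
    set g : Ordinal → Ordinal := fun i =>
      if h : i < μ.ord then ordOf ((Ordinal.enum ((· < ·) : S x → S x → Prop)
        ⟨i, lt_of_lt_of_le h hoμ⟩ : S x) : T) else i with hg
    have hgmono : StrictMonoOn g (Set.Iio μ.ord) := by
      intro a ha b hb hab
      simp only [Set.mem_Iio] at ha hb
      simp only [hg, dif_pos ha, dif_pos hb]
      apply hordmono
      have := (Ordinal.enum_lt_enum (r := ((· < ·) : S x → S x → Prop))
        (o₁ := ⟨a, lt_of_lt_of_le ha hoμ⟩) (o₂ := ⟨b, lt_of_lt_of_le hb hoμ⟩)).mpr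
        (Subtype.mk_lt_mk.mpr hab)
      exact this
    have hgbd : ∀ i < μ.ord, g i < κ.ord := by
      intro i hi
      simp only [hg, dif_pos hi]
      exact hordlt _
    have hempty := hAreg g hgmono hgbd
    have hx : x ∈ ⋂ i ∈ Set.Iio μ.ord, A (g i) := by
      refine Set.mem_iInter₂.mpr fun i hi => ?_
      have hi' : i < μ.ord := hi
      simp only [hg, dif_pos hi']
      exact (Ordinal.enum ((· < ·) : S x → S x → Prop) ⟨i, lt_of_lt_of_le hi' hoμ⟩).2
    rw [hempty] at hx
    exact hx
  -- embed functions on S x into β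
  have hle : ∀ x : X, #(S x → Bool) ≤ #β := by
    intro x
    calc #(S x → Bool) = (2 : Cardinal) ^ #(S x) := by
          rw [← Cardinal.mk_bool, Cardinal.power_def]
      _ ≤ 2 ^< μ := Cardinal.le_powerlt 2 (hS x)
      _ = #β := hβ.symm
  have hemb : ∀ x : X, Nonempty ((S x → Bool) ↪ β) := fun x => Cardinal.le_def _ _ |>.mp (hle x)
  set emb : ∀ x : X, (S x → Bool) ↪ β := fun x => (hemb x).some with hembdef
  set F : (T → Bool) → X → β := fun f x => emb x (fun t => f t.1) with hF
  have hinj : Function.Injective (fun f : T → Bool => (F f : Filter.Germ (U : Filter X) β)) := by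
    intro f f' h
    simp only [Filter.Germ.coe_eq] at h
    funext t
    by_contra ht
    have hA : A (ordOf t) ∈ (U : Filter X) := hAU _ (hordlt t)
    have hA' : ∀ᶠ x in (U : Filter X), x ∈ A (ordOf t) := Filter.eventually_iff.mpr (by simpa using hA)
    obtain ⟨x, hfx, hxA⟩ := (h.and hA').exists
    have ht' : t ∈ S x := hxA
    have := (emb x).injective hfx
    exact ht (congrFun this ⟨t, ht'⟩)
  calc (2 : Cardinal) ^ κ = #(T → Bool) := by
        rw [← Cardinal.mk_bool, ← Cardinal.mk_ord_toType κ, Cardinal.power_def]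
    _ ≤ #(Filter.Germ (U : Filter X) β) := Cardinal.mk_le_of_injective hinj
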